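/- Let a > 0 and 0 < b ≤ (√a/I₁(√a))·√(2I₀(√a)-1)/(I₀(√a)-1). Then any solution h of -(1/r)(r h')' + a h = b/√(1+h'²) with h'(0)=0, h(1)=0 satisfies |h'(r)| ≤ √(2I₀(√a)-1)/(I₀(√a)-1) for all r ∈ [0,1]. -/

import Mathlib

open Real MeasureTheory Set Filter Topology

/-- Modified Bessel function of the first kind, order 0. -/
noncomputable def besselI0 (z : ℝ) : ℝ :=
  ∑' k : ℕ, (z / 2) ^ (2 * k) / ((Nat.factorial k : ℝ) * Nat.factorial k)

/-- Modified Bessel function of the first kind, order 1. -/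
noncomputable def besselI1 (z : ℝ) : ℝ :=
  ∑' k : ℕ, (z / 2) ^ (2 * k + 1) / ((Nat.factorial k : ℝ) * Nat.factorial (k + 1))

/-- Modified Bessel function of the first kind, order 2. -/
noncomputable def besselI2 (z : ℝ) : ℝ :=
  ∑' k : ℕ, (z / 2) ^ (2 * k + 2) / ((Nat.factorial k : ℝ) * Nat.factorial (k + 2))

/-- Modified Bessel function of the second kind, order 0 (integral representation). -/
noncomputable def besselK0 (z : ℝ) : ℝ :=
  ∫ t in Set.Ioi (0 : ℝ), Real.exp (-z * Real.cosh t)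

/-- Modified Bessel function of the second kind, order 1 (integral representation). -/
noncomputable def besselK1 (z : ℝ) : ℝ :=
  ∫ t in Set.Ioi (0 : ℝ), Real.exp (-z * Real.cosh t) * Real.cosh t

noncomputable def Pfun (x : ℝ) : ℝ := 1 / Real.sqrt (1 + x ^ 2)

noncomputable def v0 (a r : ℝ) : ℝ := besselI0 (Real.sqrt a * r)

noncomputable def v1 (a r : ℝ) : ℝ :=
  besselI0 (Real.sqrt a) * besselK0 (Real.sqrt a * r)
    - besselI0 (Real.sqrt a * r) * besselK0 (Real.sqrt a)

noncomputable def Fker (a b r t : ℝ) : ℝ :=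
  (b / besselI0 (Real.sqrt a)) *
    ((if t ∈ Set.Icc r 1 then t * v0 a r * v1 a t else 0)
      + (if t ∈ Set.Icc 0 r then t * v0 a t * v1 a r else 0))

/-- Picard iterates: `h₀(r) = (b/a)(1 - I₀(√a r)/I₀(√a))`,
`hₙ(r) = ∫₀¹ F(r,t) P(h'_{n-1}(t)) dt`. -/
noncomputable def picard (a b : ℝ) : ℕ → ℝ → ℝ
  | 0 => fun r => (b / a) * (1 - besselI0 (Real.sqrt a * r) / besselI0 (Real.sqrt a))
  | n + 1 => fun r => ∫ t in (0 : ℝ)..1, Fker a b r t * Pfun (deriv (picard a b n) t)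

/-- `h` solves the corneal boundary value problem
`-(1/r)(r h')' + a h = b/√(1 + h'²)` on `(0,1)`, `h'(0) = 0`, `h(1) = 0`. -/
def SolvesBVP (a b : ℝ) (h : ℝ → ℝ) : Prop :=
  ContDiffOn ℝ 2 h (Set.Icc 0 1) ∧
  (∀ r ∈ Set.Ioo (0 : ℝ) 1,
    -(1 / r) * deriv (fun s : ℝ => s * deriv h s) r + a * h r
      = b / Real.sqrt (1 + (deriv h r) ^ 2)) ∧
  deriv h 0 = 0 ∧ h 1 = 0

/- ===== auxiliary lemmas ===== -/

private lemma fact_one_le' (k : ℕ) : (1:ℝ) ≤ (Nat.factorial k : ℝ) := by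
  exact_mod_cast Nat.one_le_iff_ne_zero.2 (Nat.factorial_ne_zero k)

private lemma besselI0_summable' (z : ℝ) :
    Summable (fun k : ℕ => (z / 2) ^ (2 * k) / ((Nat.factorial k : ℝ) * Nat.factorial k)) := by
  apply Summable.of_nonneg_of_le
    (fun k => by rw [pow_mul]; positivity)
    (fun k => ?_) (Real.summable_pow_div_factorial ((z/2)^2))
  rw [pow_mul]
  have h1 := fact_one_le' k
  have h2 : (Nat.factorial k : ℝ) ≤ (Nat.factorial k : ℝ) * Nat.factorial k := by nlinarith
  gcongr

private lemma besselI1_summable' {z : ℝ} (hz : 0 ≤ z) :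
    Summable (fun k : ℕ =>
      (z / 2) ^ (2 * k + 1) / ((Nat.factorial k : ℝ) * Nat.factorial (k + 1))) := by
  apply Summable.of_nonneg_of_le
    (fun k => by positivity)
    (fun k => ?_) ((Real.summable_pow_div_factorial ((z/2)^2)).mul_left (z/2))
  have hfk := fact_one_le' k
  have hfk1 := fact_one_le' (k+1)
  have hrw : (z / 2) ^ (2 * k + 1) = ((z/2)^2)^k * (z/2) := by
    rw [pow_succ, pow_mul]
  rw [hrw]
  have h2 : (Nat.factorial k : ℝ) ≤ (Nat.factorial k : ℝ) * Nat.factorial (k + 1) := by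
    nlinarith
  calc ((z/2)^2)^k * (z/2) / ((Nat.factorial k : ℝ) * Nat.factorial (k + 1))
      ≤ ((z/2)^2)^k * (z/2) / (Nat.factorial k : ℝ) := by gcongr
    _ = z / 2 * (((z/2)^2)^k / (Nat.factorial k : ℝ)) := by ring

private lemma besselI0_ge' {x : ℝ} (hx : 0 ≤ x) : 1 + (x/2)^2 ≤ besselI0 x := by
  have hs := besselI0_summable' x
  have h2 := Summable.sum_le_tsum (Finset.range 2)
    (fun k _ => by rw [pow_mul]; positivity) hs
  rw [Finset.sum_range_succ, Finset.sum_range_one] at h2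
  simp [Nat.factorial] at h2
  unfold besselI0
  convert h2 using 2 <;> norm_num

private lemma besselI1_ge' {x : ℝ} (hx : 0 ≤ x) : x / 2 ≤ besselI1 x := by
  have hs := besselI1_summable' hx
  have h0 := Summable.le_tsum hs 0 (fun k _ => by positivity)
  unfold besselI1
  calc x / 2 = (x / 2) ^ (2 * 0 + 1) / ((Nat.factorial 0 : ℝ) * Nat.factorial (0 + 1)) := by
        norm_num [Nat.factorial]
    _ ≤ _ := h0

private lemma Pfun_pos (x : ℝ) : 0 < Pfun x := by
  unfold Pfun
  positivity

private lemma Pfun_le_one (x : ℝ) : Pfun x ≤ 1 := by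
  unfold Pfun
  rw [div_le_one (by positivity)]
  have h1 : (1:ℝ) = Real.sqrt 1 := by simp
  rw [h1]
  exact Real.sqrt_le_sqrt (by nlinarith [sq_nonneg x])

private lemma Pfun_continuous : Continuous Pfun := by
  apply Continuous.div continuous_const
  · exact Real.continuous_sqrt.comp (by continuity)
  · intro x
    exact ne_of_gt (Real.sqrt_pos.2 (by positivity))

/-- Key "push" lemma: if at a point `r₀ < 1` with `r₀ * w r₀ = 0` the forcing `F` is
positive, the function `k` strictly increases to the right of `r₀`. -/
private lemma push_up (k w F : ℝ → ℝ)
    (hk : ContinuousOn k (Set.Icc 0 1))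
    (hF : ContinuousOn F (Set.Icc 0 1))
    (hftc : ∀ x y : ℝ, 0 ≤ x → x ≤ y → y ≤ 1 →
      y * w y - x * w x = ∫ t in x..y, t * F t)
    (hw : ∀ t ∈ Set.Ioo (0:ℝ) 1, deriv k t = w t)
    (r₀ : ℝ) (hr₀ : r₀ ∈ Set.Icc (0:ℝ) 1) (hr₀1 : r₀ < 1)
    (hw0 : r₀ * w r₀ = 0) (hF0 : 0 < F r₀) :
    ∃ c, r₀ < c ∧ c ≤ 1 ∧ k r₀ < k c := by
  set δ := F r₀ / 2 with hδdef
  have hδpos : 0 < δ := by positivity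
  have hev : ∀ᶠ t in 𝓝[Set.Icc (0:ℝ) 1] r₀, δ < F t :=
    (hF r₀ hr₀).eventually (eventually_gt_nhds (by simp only [hδdef]; linarith))
  rw [eventually_nhdsWithin_iff] at hev
  obtain ⟨ε, hεpos, hball⟩ := Metric.eventually_nhds_iff.mp hev
  set c := min (r₀ + ε/2) 1 with hcdef
  have hr₀c : r₀ < c := lt_min (by linarith) hr₀1
  have hc1 : c ≤ 1 := min_le_right _ _
  have hFge : ∀ t ∈ Set.Icc r₀ c, δ ≤ F t := by
    intro t ht
    have htIcc : t ∈ Set.Icc (0:ℝ) 1 := ⟨le_trans hr₀.1 ht.1, le_trans ht.2 hc1⟩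
    have h2 : t ≤ r₀ + ε/2 := le_trans ht.2 (min_le_left _ _)
    have hdist : dist t r₀ < ε := by
      rw [Real.dist_eq, abs_lt]
      constructor <;> [linarith [ht.1]; linarith]
    exact le_of_lt (hball hdist htIcc)
  have hwpos : ∀ t ∈ Set.Ioc r₀ c, 0 < w t := by
    intro t ht
    have h0t : 0 < t := lt_of_le_of_lt hr₀.1 ht.1
    have htc1 : t ≤ 1 := le_trans ht.2 hc1
    have heq := hftc r₀ t hr₀.1 ht.1.le htc1
    rw [hw0, sub_zero] at heq
    have hIccsub : Set.Icc r₀ t ⊆ Set.Icc (0:ℝ) 1 := Set.Icc_subset_Icc hr₀.1 htc1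
    have hint : δ * ((t^2 - r₀^2)/2) ≤ ∫ s in r₀..t, s * F s := by
      have h1 : ∫ s in r₀..t, δ * s = δ * ((t^2 - r₀^2)/2) := by
        rw [intervalIntegral.integral_const_mul, integral_id]
      rw [← h1]
      apply intervalIntegral.integral_mono_on ht.1.le
      · exact (continuous_const.mul continuous_id).intervalIntegrable _ _
      · apply ContinuousOn.intervalIntegrable
        apply ContinuousOn.mul continuousOn_id
        apply hF.mono
        rw [Set.uIcc_of_le ht.1.le]
        exact hIccsub
      · intro s hs
        have hs0 : 0 ≤ s := le_trans hr₀.1 hs.1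
        have := hFge s ⟨hs.1, le_trans hs.2 ht.2⟩
        nlinarith
    have hsq : r₀^2 < t^2 := by nlinarith [hr₀.1, ht.1]
    have hpos : 0 < δ * ((t^2 - r₀^2)/2) := by
      apply mul_pos hδpos; linarith
    have htw : 0 < t * w t := by linarith
    nlinarith
  have hmono : StrictMonoOn k (Set.Icc r₀ c) := by
    apply strictMonoOn_of_deriv_pos (convex_Icc _ _)
    · exact hk.mono (Set.Icc_subset_Icc hr₀.1 hc1)
    · intro x hx
      rw [interior_Icc] at hx
      have hx01 : x ∈ Set.Ioo (0:ℝ) 1 :=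
        ⟨lt_of_le_of_lt hr₀.1 hx.1, lt_of_lt_of_le hx.2 hc1⟩
      rw [hw x hx01]
      exact hwpos x ⟨hx.1, hx.2.le⟩
  exact ⟨c, hr₀c, hc1,
    hmono (Set.left_mem_Icc.2 hr₀c.le) (Set.right_mem_Icc.2 hr₀c.le) hr₀c⟩


theorem solution_deriv_bound (a b : ℝ) (ha : 0 < a) (hb0 : 0 < b)
    (hb : b ≤ (Real.sqrt a / besselI1 (Real.sqrt a))
      * Real.sqrt (2 * besselI0 (Real.sqrt a) - 1) / (besselI0 (Real.sqrt a) - 1))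
    (h : ℝ → ℝ) (hsol : SolvesBVP a b h) :
    ∀ r ∈ Set.Icc (0 : ℝ) 1,
      |deriv h r| ≤ Real.sqrt (2 * besselI0 (Real.sqrt a) - 1)
        / (besselI0 (Real.sqrt a) - 1) := by
  obtain ⟨hC2, hODE, hd0, hval1⟩ := hsol
  have hcont : ContinuousOn h (Set.Icc 0 1) := hC2.continuousOn
  have hUD : UniqueDiffOn ℝ (Set.Icc (0:ℝ) 1) := uniqueDiffOn_Icc one_pos
  set g := derivWithin h (Set.Icc (0:ℝ) 1) with hgdef
  have hgcont : ContinuousOn g (Set.Icc 0 1) :=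
    hC2.continuousOn_derivWithin hUD (by norm_num)
  have hC2oo : ContDiffOn ℝ 2 h (Set.Ioo (0:ℝ) 1) := hC2.mono Set.Ioo_subset_Icc_self
  have hdiff : ∀ r ∈ Set.Ioo (0:ℝ) 1, DifferentiableAt ℝ h r := fun r hr =>
    (hC2oo.differentiableOn (by norm_num)).differentiableAt (isOpen_Ioo.mem_nhds hr)
  have hgr : ∀ r ∈ Set.Ioo (0:ℝ) 1, g r = deriv h r := fun r hr =>
    (hdiff r hr).derivWithin (hUD r (Set.Ioo_subset_Icc_self hr))
  have hder2 : ∀ r ∈ Set.Ioo (0:ℝ) 1, DifferentiableAt ℝ (deriv h) r := by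
    intro r hr
    have h1 : ContDiffOn ℝ 1 (deriv h) (Set.Ioo (0:ℝ) 1) :=
      hC2oo.deriv_of_isOpen isOpen_Ioo (by norm_num)
    exact (h1.differentiableOn (by norm_num)).differentiableAt (isOpen_Ioo.mem_nhds hr)
  have hψdiff : ∀ r ∈ Set.Ioo (0:ℝ) 1, DifferentiableAt ℝ (fun s => s * deriv h s) r :=
    fun r hr => differentiableAt_fun_id.mul (hder2 r hr)
  -- value of the derivative from the ODE
  have hD : ∀ r ∈ Set.Ioo (0:ℝ) 1,
      deriv (fun s => s * deriv h s) r = r * (a * h r - b * Pfun (deriv h r)) := by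
    intro r hr
    have hr0 : r ≠ 0 := ne_of_gt hr.1
    have heq := hODE r hr
    have hP : b * Pfun (deriv h r) = b / Real.sqrt (1 + (deriv h r)^2) := by
      rw [Pfun, mul_one_div]
    rw [mul_sub, hP]
    have h2 : (1/r) * deriv (fun s : ℝ => s * deriv h s) r
        = a * h r - b / Real.sqrt (1 + (deriv h r)^2) := by linarith
    have h3 : deriv (fun s : ℝ => s * deriv h s) r
        = r * ((1/r) * deriv (fun s : ℝ => s * deriv h s) r) := by
      field_simp
    rw [h3, h2]
    ring
  -- continuity of the forcing term
  have hFcont : ContinuousOn (fun t => a * h t - b * Pfun (g t)) (Set.Icc (0:ℝ) 1) :=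
    (continuousOn_const.mul hcont).sub
      (continuousOn_const.mul (Pfun_continuous.comp_continuousOn hgcont))
  have hPg : ContinuousOn (fun t => t * (a * h t - b * Pfun (g t))) (Set.Icc (0:ℝ) 1) :=
    ContinuousOn.mul continuousOn_id hFcont
  -- fundamental theorem of calculus representation
  have hftc : ∀ x y : ℝ, 0 ≤ x → x ≤ y → y ≤ 1 →
      y * g y - x * g x = ∫ t in x..y, t * (a * h t - b * Pfun (g t)) := by
    intro x y hx hxy hy1
    have hsub : Set.Icc x y ⊆ Set.Icc (0:ℝ) 1 := Set.Icc_subset_Icc hx hy1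
    have hd : ∀ t ∈ Set.Ioo x y, HasDerivWithinAt (fun s => s * g s)
        (t * (a * h t - b * Pfun (g t))) (Set.Ioi t) t := by
      intro t ht
      have ht01 : t ∈ Set.Ioo (0:ℝ) 1 := ⟨lt_of_le_of_lt hx ht.1, lt_of_lt_of_le ht.2 hy1⟩
      have hEq : (fun s => s * g s) =ᶠ[𝓝 t] (fun s => s * deriv h s) := by
        filter_upwards [Ioo_mem_nhds ht01.1 ht01.2] with s hs
        rw [hgr s hs]
      have h1 : HasDerivAt (fun s => s * deriv h s)
          (t * (a * h t - b * Pfun (g t))) t := by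
        have h2 := (hψdiff t ht01).hasDerivAt
        rw [hD t ht01, ← hgr t ht01] at h2
        exact h2
      exact (h1.congr_of_eventuallyEq hEq).hasDerivWithinAt
    have hi : IntervalIntegrable (fun t => t * (a * h t - b * Pfun (g t)))
        MeasureTheory.volume x y :=
      (hPg.mono (by rw [Set.uIcc_of_le hxy]; exact hsub)).intervalIntegrable
    have hres := intervalIntegral.integral_eq_sub_of_hasDeriv_right_of_le hxy
      ((continuousOn_id.mul hgcont).mono hsub) hd hi
    rw [hres]
    rfl
  -- upper bound a * h ≤ b via maximum principle
  have hub : ∀ r ∈ Set.Icc (0:ℝ) 1, a * h r ≤ b := by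
    obtain ⟨r₀, hr₀mem, hr₀max⟩ :=
      isCompact_Icc.exists_isMaxOn (Set.nonempty_Icc.2 zero_le_one) hcont
    intro r hr
    have hle : h r ≤ h r₀ := hr₀max hr
    by_contra hcon
    push_neg at hcon
    have hcon0 : b < a * h r₀ := by nlinarith
    have hr₀1 : r₀ < 1 := by
      rcases lt_or_eq_of_le hr₀mem.2 with h' | h'
      · exact h'
      · exfalso
        rw [h', hval1] at hcon0
        nlinarith
    have hw0 : r₀ * g r₀ = 0 := by
      rcases eq_or_lt_of_le hr₀mem.1 with h0 | h0
      · rw [← h0, zero_mul]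
      · have hin : r₀ ∈ Set.Ioo (0:ℝ) 1 := ⟨h0, hr₀1⟩
        have hz : deriv h r₀ = 0 :=
          (hr₀max.isLocalMax (Icc_mem_nhds h0 hr₀1)).deriv_eq_zero
        rw [hgr r₀ hin, hz, mul_zero]
    have hF0 : 0 < a * h r₀ - b * Pfun (g r₀) := by
      have h1 := Pfun_le_one (g r₀)
      nlinarith [mul_nonneg hb0.le (sub_nonneg.2 h1)]
    obtain ⟨c, hc1, hc2, hc3⟩ := push_up h g (fun t => a * h t - b * Pfun (g t))
      hcont hFcont hftc (fun t ht => (hgr t ht).symm) r₀ hr₀mem hr₀1 hw0 hF0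
    exact absurd (hr₀max ⟨le_trans hr₀mem.1 hc1.le, hc2⟩) (not_le.2 hc3)
  -- lower bound 0 ≤ h via minimum principle
  have hlb : ∀ r ∈ Set.Icc (0:ℝ) 1, 0 ≤ h r := by
    obtain ⟨r₁, hr₁mem, hr₁min⟩ :=
      isCompact_Icc.exists_isMinOn (Set.nonempty_Icc.2 zero_le_one) hcont
    intro r hr
    have hge : h r₁ ≤ h r := hr₁min hr
    by_contra hcon
    push_neg at hcon
    have hcon1 : h r₁ < 0 := lt_of_le_of_lt hge hcon
    have hr₁1 : r₁ < 1 := by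
      rcases lt_or_eq_of_le hr₁mem.2 with h' | h'
      · exact h'
      · exfalso
        rw [h', hval1] at hcon1
        linarith
    have hw0 : r₁ * (-(g r₁)) = 0 := by
      rcases eq_or_lt_of_le hr₁mem.1 with h0 | h0
      · rw [← h0, zero_mul]
      · have hin : r₁ ∈ Set.Ioo (0:ℝ) 1 := ⟨h0, hr₁1⟩
        have hz : deriv h r₁ = 0 :=
          (hr₁min.isLocalMin (Icc_mem_nhds h0 hr₁1)).deriv_eq_zero
        rw [hgr r₁ hin, hz]
        ring
    have hF0 : 0 < -(a * h r₁ - b * Pfun (g r₁)) := by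
      have h1 := Pfun_pos (g r₁)
      nlinarith [mul_pos hb0 h1, mul_neg_of_pos_of_neg ha hcon1]
    have hftc' : ∀ x y : ℝ, 0 ≤ x → x ≤ y → y ≤ 1 →
        y * (-(g y)) - x * (-(g x)) = ∫ t in x..y, t * (-(a * h t - b * Pfun (g t))) := by
      intro x y hx hxy hy1
      have h1 := hftc x y hx hxy hy1
      have h2 : (∫ t in x..y, t * (-(a * h t - b * Pfun (g t))))
          = -∫ t in x..y, t * (a * h t - b * Pfun (g t)) := by
        rw [← intervalIntegral.integral_neg]
        congr 1
        funext t
        ring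
      rw [h2]
      linarith
    obtain ⟨c, hc1, hc2, hc3⟩ := push_up (fun t => -(h t)) (fun t => -(g t))
      (fun t => -(a * h t - b * Pfun (g t)))
      hcont.neg hFcont.neg hftc'
      (fun t ht => by
        show deriv (fun t => -(h t)) t = -(g t)
        rw [deriv.fun_neg, hgr t ht]) r₁ hr₁mem hr₁1 hw0 hF0
    have hmin := hr₁min ⟨le_trans hr₁mem.1 hc1.le, hc2⟩
    simp only [neg_lt_neg_iff] at hc3
    exact absurd hmin (not_le.2 hc3)
  -- the key integral bound
  have hgb : ∀ x ∈ Set.Icc (0:ℝ) 1, |x * g x| ≤ b * x ^ 2 / 2 := by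
    intro x hx
    have h1 := hftc 0 x le_rfl hx.1 hx.2
    rw [zero_mul, sub_zero] at h1
    rw [h1]
    have hi : IntervalIntegrable (fun t => t * (a * h t - b * Pfun (g t)))
        MeasureTheory.volume 0 x :=
      (hPg.mono (by rw [Set.uIcc_of_le hx.1]; exact Set.Icc_subset_Icc le_rfl hx.2)).intervalIntegrable
    calc |∫ t in (0:ℝ)..x, t * (a * h t - b * Pfun (g t))|
        ≤ ∫ t in (0:ℝ)..x, |t * (a * h t - b * Pfun (g t))| :=
          intervalIntegral.abs_integral_le_integral_abs hx.1
      _ ≤ ∫ t in (0:ℝ)..x, b * t := by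
          apply intervalIntegral.integral_mono_on hx.1 hi.abs
            ((continuous_const.mul continuous_id).intervalIntegrable _ _)
          intro t ht
          have ht01 : t ∈ Set.Icc (0:ℝ) 1 := ⟨ht.1, le_trans ht.2 hx.2⟩
          have hub' := hub t ht01
          have hlb' := mul_nonneg ha.le (hlb t ht01)
          have hp1 := Pfun_le_one (g t)
          have hp0 := Pfun_pos (g t)
          rw [abs_mul, abs_of_nonneg ht.1]
          have habs : |a * h t - b * Pfun (g t)| ≤ b := by
            rw [abs_le]
            constructor
            · nlinarith [mul_nonneg hb0.le (sub_nonneg.2 hp1)]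
            · nlinarith [mul_pos hb0 hp0]
          calc t * |a * h t - b * Pfun (g t)| ≤ t * b :=
                mul_le_mul_of_nonneg_left habs ht.1
            _ = b * t := mul_comm _ _
      _ = b * x ^ 2 / 2 := by
          rw [intervalIntegral.integral_const_mul, integral_id]
          ring
  -- Bessel constants
  have hx0 : 0 < Real.sqrt a := Real.sqrt_pos.2 ha
  have hI0ge := besselI0_ge' (Real.sqrt_nonneg a)
  have hI1ge := besselI1_ge' (Real.sqrt_nonneg a)
  set M := Real.sqrt (2 * besselI0 (Real.sqrt a) - 1) / (besselI0 (Real.sqrt a) - 1)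
    with hMdef
  have hI0m1 : 0 < besselI0 (Real.sqrt a) - 1 := by nlinarith [sq_nonneg (Real.sqrt a)]
  have hI1pos : 0 < besselI1 (Real.sqrt a) := lt_of_lt_of_le (by positivity) hI1ge
  have hMnn : 0 ≤ M := div_nonneg (Real.sqrt_nonneg _) hI0m1.le
  have hfrac : Real.sqrt a / besselI1 (Real.sqrt a) ≤ 2 := by
    rw [div_le_iff₀ hI1pos]
    linarith
  have hb2M : b ≤ 2 * M := by
    have heq : (Real.sqrt a / besselI1 (Real.sqrt a))
        * Real.sqrt (2 * besselI0 (Real.sqrt a) - 1) / (besselI0 (Real.sqrt a) - 1)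
        = (Real.sqrt a / besselI1 (Real.sqrt a)) * M := by
      rw [hMdef]
      ring
    calc b ≤ _ := hb
      _ = (Real.sqrt a / besselI1 (Real.sqrt a)) * M := heq
      _ ≤ 2 * M := mul_le_mul_of_nonneg_right hfrac hMnn
  -- conclusion
  intro r hr
  rcases eq_or_lt_of_le hr.1 with h0 | h0
  · rw [← h0, hd0, abs_zero]
    exact hMnn
  rcases eq_or_lt_of_le hr.2 with h1 | h1
  · -- r = 1
    rw [h1]
    by_cases hd1 : DifferentiableAt ℝ h 1
    · have hg1 : deriv h 1 = g 1 :=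
        (hd1.derivWithin (hUD 1 (Set.mem_Icc.2 ⟨zero_le_one, le_rfl⟩))).symm
      have hq := hgb 1 (Set.mem_Icc.2 ⟨zero_le_one, le_rfl⟩)
      rw [one_mul, one_pow] at hq
      rw [hg1]
      linarith [abs_nonneg (g 1)]
    · rw [deriv_zero_of_not_differentiableAt hd1, abs_zero]
      exact hMnn
  · -- 0 < r < 1
    have hin : r ∈ Set.Ioo (0:ℝ) 1 := ⟨h0, h1⟩
    have hq := hgb r hr
    rw [abs_mul, abs_of_nonneg hr.1] at hq
    have hgle : |g r| ≤ b * r / 2 := by nlinarith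
    have hr2 : b * r / 2 ≤ b / 2 := by nlinarith [hr.2]
    rw [← hgr r hin]
    linarith
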